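/- Let M be a matroid on ground set E with a nonnegative weight function w : E → ℝ≥0. For a subset A ⊆ E, let R(A) denote the maximum weight of an independent set in the contraction M/A (equivalently, the maximum of ∑_{i∈I} w(i) over sets I disjoint from A with A ∪ I independent, assuming A is independent). Then for any independent set A and any set V independent in M/A, ∑_{i∈V} (R(A) - R(A ∪ {i})) ≤ R(A). -/

import Mathlib

/-- The maximum weight of an independent set in the contraction `M / A`:
the supremum of `∑ i in I, w i` over finsets `I` disjoint from `A` with
`A ∪ I` independent. -/
noncomputable def resVal {α : Type*} (M : Matroid α) (w : α → ℝ) (A : Set α) : ℝ :=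
  sSup {x : ℝ | ∃ I : Finset α, Disjoint (↑I : Set α) A ∧ M.Indep (A ∪ ↑I) ∧
    x = ∑ i ∈ I, w i}

private lemma resVal_vals_finite {α : Type*} [Fintype α] (M : Matroid α) (w : α → ℝ)
    (A : Set α) :
    {x : ℝ | ∃ I : Finset α, Disjoint (↑I : Set α) A ∧ M.Indep (A ∪ ↑I) ∧
      x = ∑ i ∈ I, w i}.Finite := by
  apply (Set.finite_range (fun I : Finset α => ∑ i ∈ I, w i)).subset
  rintro x ⟨I, -, -, rfl⟩
  exact ⟨I, rfl⟩

private lemma le_resVal {α : Type*} [Fintype α] {M : Matroid α} {w : α → ℝ} {A : Set α}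
    (I : Finset α) (h1 : Disjoint (↑I : Set α) A) (h2 : M.Indep (A ∪ ↑I)) :
    ∑ i ∈ I, w i ≤ resVal M w A :=
  le_csSup (resVal_vals_finite M w A).bddAbove ⟨I, h1, h2, rfl⟩

/-- An independent set contained in the closure of another independent set has no
larger cardinality. -/
private lemma indep_encard_le_of_subset_closure {α : Type*} {M : Matroid α} {I J : Set α}
    (hI : M.Indep I) (hJ : M.Indep J) (h : I ⊆ M.closure J) : I.encard ≤ J.encard := by
  obtain ⟨I', hI', hII'⟩ := hI.subset_isBasis_of_subset h (M.closure_subset_ground J)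
  exact (Set.encard_mono hII').trans_eq (hI'.encard_eq_encard hJ.isBasis_closure)

theorem matroid_marginal_bound {α : Type*} [Fintype α] (M : Matroid α)
    (w : α → ℝ) (hw : ∀ i, 0 ≤ w i) (A : Set α) (hA : M.Indep A)
    (V : Finset α) (hVA : Disjoint (↑V : Set α) A) (hV : M.Indep (A ∪ ↑V)) :
    ∑ i ∈ V, (resVal M w A - resVal M w (A ∪ {i})) ≤ resVal M w A := by
  classical
  -- The value `resVal M w A` is attained by some feasible finset `B₀`.
  have hvalsne : {x : ℝ | ∃ I : Finset α, Disjoint (↑I : Set α) A ∧ M.Indep (A ∪ ↑I) ∧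
      x = ∑ i ∈ I, w i}.Nonempty := by
    exact ⟨0, ∅, by simp, by simpa using hA, by simp⟩
  have hmem := hvalsne.csSup_mem (resVal_vals_finite M w A)
  rw [show sSup {x : ℝ | ∃ I : Finset α, Disjoint (↑I : Set α) A ∧ M.Indep (A ∪ ↑I) ∧
      x = ∑ i ∈ I, w i} = resVal M w A from rfl] at hmem
  obtain ⟨B₀, hB₀d, hB₀i, hB₀s⟩ := hmem
  -- Among optimal feasible sets, choose one `B` of maximum cardinality.
  set t : Set (Finset α) := {I : Finset α | Disjoint (↑I : Set α) A ∧ M.Indep (A ∪ ↑I) ∧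
      ∑ i ∈ I, w i = resVal M w A} with ht
  have htfin : t.Finite := Set.toFinite t
  have htne : t.Nonempty := ⟨B₀, hB₀d, hB₀i, hB₀s.symm⟩
  obtain ⟨B, hBt, hBmax⟩ := htfin.exists_maximalFor Finset.card t htne
  obtain ⟨hBd, hBi, hBs⟩ := hBt
  -- `B` cannot be extended by any element of positive or zero weight:
  -- adding any new element to `A ∪ B` destroys independence.
  have hBspan : ∀ i : α, i ∈ M.E → i ∉ A → i ∉ B → ¬ M.Indep (insert i (A ∪ ↑B)) := by
    intro i hiE hiA hiB hind
    have hd' : Disjoint (↑(insert i B) : Set α) A := by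
      rw [Finset.coe_insert]
      rw [Set.disjoint_left]
      rintro x (rfl | hx)
      · exact hiA
      · exact Set.disjoint_left.1 hBd hx
    have hi' : M.Indep (A ∪ ↑(insert i B)) := by
      rw [Finset.coe_insert, Set.union_insert]
      exact hind
    have hle := le_resVal (M := M) (w := w) (A := A) (insert i B) hd' hi'
    rw [Finset.sum_insert hiB, hBs] at hle
    have hwi : w i = 0 := le_antisymm (by linarith) (hw i)
    have hmemt : insert i B ∈ t := by
      refine ⟨hd', hi', ?_⟩
      rw [Finset.sum_insert hiB, hwi, hBs]; ring
    have := hBmax hmemt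
      (by rw [Finset.card_insert_of_notMem hiB]; omega)
    rw [Finset.card_insert_of_notMem hiB] at this
    omega
  -- members of `V` lie in the ground set, are not in `A`
  have hVE : (↑V : Set α) ⊆ M.E := fun x hx => hV.subset_ground (Or.inr hx)
  -- Exchange candidates for each `i`.
  set E : α → Finset α := fun i =>
    if i ∈ B then {i} else B.filter (fun e => M.Indep ((A ∪ {i}) ∪ ↑(B.erase e))) with hE
  have hEB : ∀ i, E i ∈ Set.univ → True := fun _ _ => trivial
  have hEsub : ∀ i ∈ V, E i ⊆ B := by
    intro i _
    by_cases h : i ∈ B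
    · simp [hE, h]
    · simp only [hE, if_neg h]
      exact Finset.filter_subset _ _
  -- Key claim: each `i ∈ V` lies in the closure of `A ∪ E i`.
  have hkey : ∀ i ∈ V, i ∈ M.closure (A ∪ ↑(E i)) := by
    intro i hiV
    have hiE : i ∈ M.E := hVE hiV
    have hiA : i ∉ A := Set.disjoint_left.1 hVA hiV
    by_cases hiB : i ∈ B
    · refine M.mem_closure_of_mem (by simp [hE, hiB]) ?_
      rw [hE]
      simp only [hiB, if_true, Finset.coe_singleton]
      exact Set.union_subset hA.subset_ground (by simpa using hiE)
    · -- i ∉ B : use a minimal subset F of B with i ∈ closure (A ∪ F)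
      have hicl : i ∈ M.closure (A ∪ ↑B) := by
        have hnotind : ¬ M.Indep (insert i (A ∪ ↑B)) := hBspan i hiE hiA hiB
        have hni : i ∉ A ∪ ↑B := by simp [hiA, hiB]
        by_contra hcon
        exact hnotind ((hBi.insert_indep_iff_of_notMem hni).2 ⟨hiE, hcon⟩)
      -- the family of subsets of B whose union with A has i in its closure
      set S : Finset (Finset α) :=
        (B.powerset).filter (fun F => i ∈ M.closure (A ∪ ↑F)) with hS
      have hBS : B ∈ S := by simp [hS, hicl]
      obtain ⟨F, hFS, hFmin⟩ := S.exists_min_image Finset.card ⟨B, hBS⟩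
      have hFB : F ⊆ B := by
        have := (Finset.mem_filter.1 hFS).1; simpa using this
      have hFcl : i ∈ M.closure (A ∪ ↑F) := (Finset.mem_filter.1 hFS).2
      -- show F ⊆ E i
      have hFE : F ⊆ E i := by
        intro e heF
        have heB : e ∈ B := hFB heF
        have heA : e ∉ A := Set.disjoint_left.1 hBd heB
        rw [hE]
        simp only [hiB, if_false, Finset.mem_filter]
        refine ⟨heB, ?_⟩
        by_contra hnind
        -- then i ∈ closure (A ∪ (B \ {e}))
        have hieB : i ∉ A ∪ ↑(B.erase e) := by
          simp only [Set.mem_union, Finset.coe_erase, Set.mem_diff]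
          push_neg
          exact ⟨hiA, fun h => absurd h hiB⟩
        have hBei : M.Indep (A ∪ ↑(B.erase e)) :=
          hBi.subset (Set.union_subset_union_right A
            (by exact_mod_cast B.erase_subset e))
        have hicl' : i ∈ M.closure (A ∪ ↑(B.erase e)) := by
          by_contra hcon
          apply hnind
          have : M.Indep (insert i (A ∪ ↑(B.erase e))) :=
            (hBei.insert_indep_iff_of_notMem hieB).2 ⟨hiE, hcon⟩
          have hset : (A ∪ {i}) ∪ ↑(B.erase e) = insert i (A ∪ ↑(B.erase e)) := by
            rw [Set.union_comm A {i}, Set.union_assoc, Set.singleton_union]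
          rwa [hset]
        -- minimality: i ∉ closure (A ∪ (F \ {e}))
        have hiFe : i ∉ M.closure (A ∪ ↑(F.erase e)) := by
          intro hcon
          have hmemS : F.erase e ∈ S := by
            simp only [hS, Finset.mem_filter, Finset.mem_powerset]
            exact ⟨(F.erase_subset e).trans hFB, hcon⟩
          have := hFmin _ hmemS
          have hlt : (F.erase e).card < F.card := Finset.card_erase_lt_of_mem heF
          omega
        -- closure exchange
        have hins : insert e (A ∪ ↑(F.erase e)) = A ∪ ↑F := by
          rw [Finset.coe_erase, ← Set.union_insert, Set.insert_diff_singleton,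
            Set.insert_eq_of_mem (by exact_mod_cast heF)]
        have hex : e ∈ M.closure (insert i (A ∪ ↑(F.erase e))) := by
          refine (Matroid.closure_exchange (X := A ∪ ↑(F.erase e)) (e := i) (f := e) ?_).1
          rw [hins]
          exact ⟨hFcl, hiFe⟩
        have hsub : M.closure (insert i (A ∪ ↑(F.erase e))) ⊆
            M.closure (insert i (A ∪ ↑(B.erase e))) := by
          apply M.closure_subset_closure
          apply Set.insert_subset_insert
          apply Set.union_subset_union_right
          exact_mod_cast Finset.erase_subset_erase e hFB
        have hecl : e ∈ M.closure (A ∪ ↑(B.erase e)) := by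
          have := hsub hex
          rwa [Matroid.closure_insert_eq_of_mem_closure hicl'] at this
        -- contradiction with independence of A ∪ B
        have hset2 : A ∪ ↑(B.erase e) = (A ∪ ↑B) \ {e} := by
          rw [Finset.coe_erase, Set.union_diff_distrib,
            Set.diff_singleton_eq_self heA]
        rw [hset2] at hecl
        exact hBi.notMem_closure_diff_of_mem (Or.inr (by exact_mod_cast heB)) hecl
      exact M.closure_subset_closure
        (Set.union_subset_union_right A (by exact_mod_cast hFE)) hFcl
  -- Hall's condition
  have hHall : ∀ s : Finset {x // x ∈ V},
      s.card ≤ (s.biUnion (fun i => E i.1)).card := by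
    intro s
    set W : Finset α := s.image Subtype.val with hW
    have hWV : W ⊆ V := by
      intro x hx
      obtain ⟨y, -, rfl⟩ := Finset.mem_image.1 hx
      exact y.2
    have hWcard : W.card = s.card := Finset.card_image_of_injective s Subtype.val_injective
    set U : Finset α := s.biUnion (fun i => E i.1) with hU
    have hUB : U ⊆ B := by
      intro x hx
      obtain ⟨y, -, hy⟩ := Finset.mem_biUnion.1 hx
      exact hEsub y.1 y.2 hy
    -- A ∪ W is independent, A ∪ U is independent, A ∪ W ⊆ closure (A ∪ U)
    have hAW : M.Indep (A ∪ ↑W) :=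
      hV.subset (Set.union_subset_union_right A (by exact_mod_cast hWV))
    have hAU : M.Indep (A ∪ ↑U) :=
      hBi.subset (Set.union_subset_union_right A (by exact_mod_cast hUB))
    have hWcl : (A ∪ ↑W : Set α) ⊆ M.closure (A ∪ ↑U) := by
      apply Set.union_subset
      · exact (M.subset_closure (A ∪ ↑U)
          (Set.union_subset hA.subset_ground
            (fun x hx => hBi.subset_ground (Or.inr (by exact_mod_cast hUB (by exact_mod_cast hx)))))).trans'
          Set.subset_union_left
      · intro x hx
        have hxV : x ∈ V := hWV (by exact_mod_cast hx)
        obtain ⟨y, hys, rfl⟩ := Finset.mem_image.1 (by exact_mod_cast hx : x ∈ W)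
        have hEsubU : E y.1 ⊆ U := Finset.subset_biUnion_of_mem (fun i => E i.1) hys
        exact M.closure_subset_closure
          (Set.union_subset_union_right A (by exact_mod_cast hEsubU)) (hkey y.1 y.2)
    have hcard := indep_encard_le_of_subset_closure hAW hAU hWcl
    rw [Set.encard_union_eq (Set.disjoint_of_subset_left
        (show (↑W : Set α) ⊆ ↑V by exact_mod_cast hWV) hVA).symm,
      Set.encard_union_eq (Set.disjoint_of_subset_left
        (show (↑U : Set α) ⊆ ↑B by exact_mod_cast hUB) hBd).symm] at hcard
    have hAfin : A.encard ≠ ⊤ := (Set.toFinite A).encard_lt_top.ne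
    rw [ENat.add_le_add_iff_left hAfin, Set.encard_coe_eq_coe_finsetCard,
      Set.encard_coe_eq_coe_finsetCard, Nat.cast_le] at hcard
    omega
  -- Hall's theorem gives a system of distinct representatives.
  obtain ⟨f, hfinj, hfmem⟩ :=
    (Finset.all_card_le_biUnion_card_iff_exists_injective (fun i : {x // x ∈ V} => E i.1)).1
      hHall
  -- For each i ∈ V, resVal M w A - resVal M w (A ∪ {i}) ≤ w (f i).
  have hterm : ∀ i : {x // x ∈ V},
      resVal M w A - resVal M w (A ∪ {i.1}) ≤ w (f i) := by
    intro i
    have hiA : i.1 ∉ A := Set.disjoint_left.1 hVA i.2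
    have hfiB : f i ∈ B := hEsub i.1 i.2 (hfmem i)
    have hfiA : f i ∉ A := Set.disjoint_left.1 hBd hfiB
    -- witness for resVal M w (A ∪ {i})
    have hwit : M.Indep ((A ∪ {i.1}) ∪ ↑(B.erase (f i))) ∧ i.1 ∉ B.erase (f i) := by
      have := hfmem i
      rw [hE] at this
      by_cases hiB : i.1 ∈ B
      · simp only [hiB, if_true, Finset.mem_singleton] at this
        rw [this]
        constructor
        · have hset : (A ∪ {i.1}) ∪ ↑(B.erase i.1) = A ∪ ↑B := by
            rw [Set.union_comm A {i.1}, Set.union_assoc, Set.singleton_union,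
              Finset.coe_erase, ← Set.union_insert, Set.insert_diff_singleton,
              Set.insert_eq_of_mem (by exact_mod_cast hiB)]
          rw [hset]; exact hBi
        · exact Finset.notMem_erase _ _
      · simp only [hiB, if_false, Finset.mem_filter] at this
        exact ⟨this.2, fun h => hiB (Finset.erase_subset _ _ h)⟩
    obtain ⟨hwind, hwni⟩ := hwit
    have hwd : Disjoint (↑(B.erase (f i)) : Set α) (A ∪ {i.1}) := by
      rw [Set.disjoint_union_right]
      constructor
      · exact Set.disjoint_of_subset_left (by exact_mod_cast B.erase_subset (f i)) hBd
      · simp only [Set.disjoint_singleton_right, Finset.mem_coe]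
        exact hwni
    have hle := le_resVal (M := M) (w := w) (A := A ∪ {i.1}) (B.erase (f i)) hwd hwind
    have hsum : ∑ e ∈ B.erase (f i), w e = resVal M w A - w (f i) := by
      rw [← hBs, ← Finset.sum_erase_add B w hfiB]; ring
    rw [hsum] at hle
    linarith
  -- Sum up.
  have h1 : ∑ i ∈ V, (resVal M w A - resVal M w (A ∪ {i})) =
      ∑ i ∈ V.attach, (resVal M w A - resVal M w (A ∪ {i.1})) :=
    (Finset.sum_attach V _).symm
  rw [h1]
  have h2 : ∑ i ∈ V.attach, (resVal M w A - resVal M w (A ∪ {i.1})) ≤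
      ∑ i ∈ V.attach, w (f i) := Finset.sum_le_sum (fun i _ => hterm i)
  have h3 : ∑ i ∈ V.attach, w (f i) = ∑ e ∈ V.attach.image f, w e :=
    (Finset.sum_image (fun x _ y _ h => hfinj h)).symm
  have h4 : V.attach.image f ⊆ B := by
    intro x hx
    obtain ⟨y, -, rfl⟩ := Finset.mem_image.1 hx
    exact hEsub y.1 y.2 (hfmem y)
  have h5 : ∑ e ∈ V.attach.image f, w e ≤ ∑ e ∈ B, w e :=
    Finset.sum_le_sum_of_subset_of_nonneg h4 (fun e _ _ => hw e)
  rw [hBs] at h5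
  linarith
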